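/- arXiv:1310.0992 — 6 statements merged into one kernel-verified Lean document; each statement's English description precedes it below -/
import Mathlib

section
/- Suppose (X,B) is a resolvable (v,b,r,k)-IBD with parallel classes Π_1,…,Π_r, each containing w = v/k blocks, and (Y,C) is a (w,b',r',k')-IBD on Y = {1,…,w}. For each parallel class Π_i and block C ∈ C, form the block D_{i,C} as the union of the blocks of Π_i indexed by C. Then the resulting design (X,D) is a (v, r*b', r*r', k*k')-IBD. -/
lemma my_filter_bind {α β : Type*} (p : β → Prop) [DecidablePred p]
    (s : Multiset α) (f : α → Multiset β) :
    Multiset.filter p (s.bind f) = s.bind (fun a => Multiset.filter p (f a)) := by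
  induction s using Multiset.induction with
  | empty => simp
  | cons a s ih => simp [Multiset.bind_cons, Multiset.filter_add, ih]

/-- Shrikhande–Raghavarao construction: a resolvable (v,b,r,k)-IBD master design
and a (w,b',r',k')-IBD indexing design (w = v/k) yield a (v, r*b', r*r', k*k')-IBD. -/
theorem stmt_3 {X : Type*} [Fintype X] [DecidableEq X]
    (v b r k w b' r' k' : ℕ)
    (hk : 2 ≤ k) (hkv : k < v) (hX : Fintype.card X = v)
    (hvw : v = k * w) (hb : b = r * w)
    (B : Fin r → Fin w → Finset X)
    (hsize : ∀ i j, (B i j).card = k)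
    (hpc : ∀ (i : Fin r) (x : X), ∃! j : Fin w, x ∈ B i j)
    (C : Multiset (Finset (Fin w)))
    (hk' : 2 ≤ k') (hk'w : k' < w)
    (hCb : Multiset.card C = b')
    (hCsize : ∀ c ∈ C, c.card = k')
    (hCrep : ∀ a : Fin w, Multiset.card (C.filter (fun c => a ∈ c)) = r') :
    ∀ D : Multiset (Finset X),
      D = (Finset.univ.val : Multiset (Fin r)).bind
            (fun i => C.map (fun c => c.biUnion (fun j => B i j))) →
      Multiset.card D = r * b' ∧
      (∀ A ∈ D, A.card = k * k') ∧
      (∀ x : X, Multiset.card (D.filter (fun A => x ∈ A)) = r * r') := by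
  intro D hD
  subst hD
  have hdisj : ∀ (i : Fin r) (j1 j2 : Fin w), j1 ≠ j2 → Disjoint (B i j1) (B i j2) := by
    intro i j1 j2 hne
    refine Finset.disjoint_left.2 fun x hx1 hx2 => hne ?_
    obtain ⟨j, _, huniq⟩ := hpc i x
    rw [huniq j1 hx1, huniq j2 hx2]
  refine ⟨?_, ?_, ?_⟩
  · rw [Multiset.card_bind]
    simp [hCb, Finset.sum_const, mul_comm]
  · intro A hA
    rw [Multiset.mem_bind] at hA
    obtain ⟨i, _, hA⟩ := hA
    rw [Multiset.mem_map] at hA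
    obtain ⟨c, hc, rfl⟩ := hA
    rw [Finset.card_biUnion (fun j1 _ j2 _ h => hdisj i j1 j2 h)]
    simp [hsize, hCsize c hc, mul_comm]
  · intro x
    rw [my_filter_bind, Multiset.card_bind]
    have : ∀ i : Fin r,
        Multiset.card (Multiset.filter (fun A => x ∈ A)
          (C.map (fun c => c.biUnion (fun j => B i j)))) = r' := by
      intro i
      obtain ⟨j, hj, huniq⟩ := hpc i x
      rw [Multiset.filter_map, Multiset.card_map]
      have : Multiset.filter ((fun A => x ∈ A) ∘ fun c => c.biUnion fun j => B i j) C
          = Multiset.filter (fun c => j ∈ c) C := by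
        apply Multiset.filter_congr
        intro c _
        simp only [Function.comp, Finset.mem_biUnion]
        constructor
        · rintro ⟨j', hj', hx⟩
          rwa [← huniq j' hx]
        · exact fun h => ⟨j, h, hj⟩
      rw [this, hCrep j]
    rw [show (Multiset.card ∘ fun a =>
          Multiset.filter (fun A => x ∈ A) (Multiset.map (fun c => c.biUnion fun j => B a j) C))
        = fun _ => r' from funext this]
    simp [Multiset.map_const', mul_comm]
end

section
/- Suppose (X,B) is a resolvable (v,k,λ)-BIBD with r parallel classes and (Y,C) is a (w,k',λ'_2)-BIBD with w = v/k and replication number r'. Then the design (X,D) obtained by Construction (taking unions of blocks within each parallel class of B indexed by blocks of C) is a (v, k*k', λ'')-BIBD with λ'' = λ*r' + (r-λ)*λ'_2. -/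
private lemma filter_bind_aux {α β : Type*} (s : Multiset α) (f : α → Multiset β)
    (p : β → Prop) [DecidablePred p] :
    (s.bind f).filter p = s.bind fun a => (f a).filter p := by
  induction s using Multiset.induction with
  | empty => simp
  | cons a s ih => simp [Multiset.filter_add, ih]

/-- If the master design is a resolvable (v,k,λ)-BIBD and the indexing design a
(w,k',λ'_2)-BIBD with replication number r', the constructed design is a
(v, k*k', λ'')-BIBD with λ'' = λ*r' + (r-λ)*λ'_2. -/
theorem stmt_4 {X : Type*} [Fintype X] [DecidableEq X]
    (v k lam r w k' r' lam2' : ℕ)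
    (hk : 2 ≤ k) (hkv : k < v) (hX : Fintype.card X = v) (hvw : v = k * w)
    (B : Fin r → Fin w → Finset X)
    (hsize : ∀ i j, (B i j).card = k)
    (hpc : ∀ (i : Fin r) (x : X), ∃! j : Fin w, x ∈ B i j)
    (hpair : ∀ x y : X, x ≠ y →
      (Finset.univ.filter (fun p : Fin r × Fin w => x ∈ B p.1 p.2 ∧ y ∈ B p.1 p.2)).card = lam)
    (C : Multiset (Finset (Fin w)))
    (hk' : 2 ≤ k') (hk'w : k' < w)
    (hCsize : ∀ c ∈ C, c.card = k')
    (hCrep : ∀ a : Fin w, Multiset.card (C.filter (fun c => a ∈ c)) = r')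
    (hCpair : ∀ a b : Fin w, a ≠ b →
      Multiset.card (C.filter (fun c => a ∈ c ∧ b ∈ c)) = lam2') :
    ∀ D : Multiset (Finset X),
      D = (Finset.univ.val : Multiset (Fin r)).bind
            (fun i => C.map (fun c => c.biUnion (fun j => B i j))) →
      (∀ A ∈ D, A.card = k * k') ∧
      (∀ x y : X, x ≠ y →
        Multiset.card (D.filter (fun A => x ∈ A ∧ y ∈ A)) = lam * r' + (r - lam) * lam2') := by
  intro D hD
  subst hD
  have hdisj : ∀ i, ∀ j1 j2 : Fin w, j1 ≠ j2 → Disjoint (B i j1) (B i j2) := by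
    intro i j1 j2 hne
    rw [Finset.disjoint_left]
    intro x h1 h2
    obtain ⟨j, hj, hu⟩ := hpc i x
    exact hne ((hu j1 h1).trans (hu j2 h2).symm)
  constructor
  · intro A hA
    simp only [Multiset.mem_bind, Multiset.mem_map, Finset.mem_val] at hA
    obtain ⟨i, -, c, hc, rfl⟩ := hA
    rw [Finset.card_biUnion (fun j1 _ j2 _ h => hdisj i j1 j2 h)]
    simp [hsize, hCsize c hc, mul_comm]
  · intro x y hxy
    choose jx hjx using fun i => hpc i x
    choose jy hjy using fun i => hpc i y
    have hmemx : ∀ (i : Fin r) (c : Finset (Fin w)),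
        x ∈ c.biUnion (fun j => B i j) ↔ jx i ∈ c := by
      intro i c
      simp only [Finset.mem_biUnion]
      constructor
      · rintro ⟨j, hjc, hjm⟩; rwa [← (hjx i).2 j hjm]
      · intro h; exact ⟨jx i, h, (hjx i).1⟩
    have hmemy : ∀ (i : Fin r) (c : Finset (Fin w)),
        y ∈ c.biUnion (fun j => B i j) ↔ jy i ∈ c := by
      intro i c
      simp only [Finset.mem_biUnion]
      constructor
      · rintro ⟨j, hjc, hjm⟩; rwa [← (hjy i).2 j hjm]
      · intro h; exact ⟨jy i, h, (hjy i).1⟩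
    rw [filter_bind_aux, Multiset.card_bind]
    have hterm : ∀ i : Fin r,
        Multiset.card ((C.map (fun c => c.biUnion (fun j => B i j))).filter
          (fun A => x ∈ A ∧ y ∈ A)) =
        if jx i = jy i then r' else lam2' := by
      intro i
      rw [Multiset.filter_map, Multiset.card_map]
      have : C.filter ((fun A => x ∈ A ∧ y ∈ A) ∘ (fun c => c.biUnion (fun j => B i j)))
          = C.filter (fun c => jx i ∈ c ∧ jy i ∈ c) := by
        apply Multiset.filter_congr
        intro c _
        simp [Function.comp, hmemx i c, hmemy i c]
      rw [this]
      by_cases h : jx i = jy i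
      · simp only [h, if_pos rfl, and_self]
        exact hCrep (jy i)
      · rw [if_neg h]
        exact hCpair _ _ h
    simp only [Function.comp]
    rw [Multiset.map_congr rfl (fun i _ => hterm i)]
    have : ((Finset.univ.val : Multiset (Fin r)).map
        (fun i => if jx i = jy i then r' else lam2')).sum
        = ∑ i : Fin r, (if jx i = jy i then r' else lam2') := rfl
    rw [this, Finset.sum_ite, Finset.sum_const, Finset.sum_const, smul_eq_mul, smul_eq_mul]
    have hlam : (Finset.univ.filter (fun i : Fin r => jx i = jy i)).card = lam := by
      rw [← hpair x y hxy]
      apply Finset.card_bij (fun i _ => (i, jx i))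
      · intro i hi
        simp only [Finset.mem_filter, Finset.mem_univ, true_and] at hi ⊢
        exact ⟨(hjx i).1, hi ▸ (hjy i).1⟩
      · intro i1 h1 i2 h2 h
        exact (Prod.mk.injEq _ _ _ _ ▸ h).1
      · rintro ⟨i, j⟩ hp
        simp only [Finset.mem_filter, Finset.mem_univ, true_and] at hp
        have hjxi : j = jx i := (hjx i).2 j hp.1
        have hjyi : j = jy i := (hjy i).2 j hp.2
        refine ⟨i, ?_, ?_⟩
        · simp only [Finset.mem_filter, Finset.mem_univ, true_and]
          rw [← hjxi, ← hjyi]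
        · rw [← hjxi]
      
    have hnot : (Finset.univ.filter (fun i : Fin r => ¬ jx i = jy i)).card = r - lam := by
      have h2 := Finset.card_filter_add_card_filter_not
        (s := (Finset.univ : Finset (Fin r))) (p := fun i => jx i = jy i)
      rw [hlam] at h2
      simp only [Finset.card_univ, Fintype.card_fin] at h2
      omega
    rw [hlam, hnot]
end

section
/- Suppose there exist a resolvable (v,b,r,k,λ)-BIBD and a 3-(w, w/2, λ')-design where w = v/k > 4 is even. Then there exists a 3-(v, v/2, μ)-design with μ = λ' * (3λw/(w-4) + r). -/
lemma ms_card_filter_bind {α β : Type*} (s : Multiset α) (f : α → Multiset β)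
    (p : β → Prop) [DecidablePred p] :
    Multiset.card ((s.bind f).filter p) = (s.map fun a => Multiset.card ((f a).filter p)).sum := by
  induction s using Multiset.induction with
  | empty => simp
  | cons a s ih => simp [Multiset.cons_bind, Multiset.filter_add, ih]

lemma ms_sum_ite {α : Type*} (s : Multiset α) (p : α → Prop) [DecidablePred p] (A : ℕ) :
    (s.map fun a => if p a then A else 0).sum = Multiset.card (s.filter p) * A := by
  induction s using Multiset.induction with
  | empty => simp
  | cons a s ih =>
    by_cases h : p a <;> simp [Multiset.filter_cons, h, ih, add_mul, add_comm]

lemma ms_sum_swap {α β : Type*} (s : Multiset α) (t : Finset β) (h : α → β → ℕ) :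
    (s.map fun a => ∑ z ∈ t, h a z).sum = ∑ z ∈ t, (s.map fun a => h a z).sum := by
  induction s using Multiset.induction with
  | empty => simp
  | cons a s ih => simp [ih, Finset.sum_add_distrib]

lemma ms_card_filter_map {α β : Type*} (s : Multiset α) (h : α → β)
    (p : β → Prop) [DecidablePred p] :
    Multiset.card ((s.map h).filter p) = Multiset.card (s.filter fun a => p (h a)) := by
  rw [← Multiset.countP_eq_card_filter, Multiset.countP_map]

lemma step_lemma {w K t L : ℕ} (C : Multiset (Finset (Fin w))) (hK : ∀ c ∈ C, c.card = K)
    (hL : ∀ T : Finset (Fin w), T.card = t + 1 →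
      Multiset.card (C.filter fun c => T ⊆ c) = L)
    (S : Finset (Fin w)) (hS : S.card = t) :
    Multiset.card (C.filter fun c => S ⊆ c) * (K - t) = L * (w - t) := by
  classical
  have key : ∀ c ∈ C,
      (((Finset.univ \ S).filter fun z => insert z S ⊆ c).card)
        = if S ⊆ c then K - t else 0 := by
    intro c hc
    by_cases hSc : S ⊆ c
    · rw [if_pos hSc]
      have : ((Finset.univ \ S).filter fun z => insert z S ⊆ c) = c \ S := by
        ext z
        simp [Finset.mem_sdiff, Finset.insert_subset_iff, hSc, and_comm]
      rw [this, Finset.card_sdiff_of_subset hSc, hK c hc, hS]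
    · rw [if_neg hSc]
      have : ((Finset.univ \ S).filter fun z => insert z S ⊆ c) = ∅ := by
        ext z
        simp only [Finset.mem_filter, Finset.notMem_empty, iff_false, not_and]
        intro _ hins
        exact absurd ((Finset.subset_insert z S).trans hins) hSc
      simp [this]
  have h1 : (C.map fun c => ((Finset.univ \ S).filter fun z => insert z S ⊆ c).card).sum
      = Multiset.card (C.filter fun c => S ⊆ c) * (K - t) := by
    rw [Multiset.map_congr rfl key, ms_sum_ite]
  have h2 : (C.map fun c => ((Finset.univ \ S).filter fun z => insert z S ⊆ c).card).sum
      = L * (w - t) := by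
    have hrw : ∀ c : Finset (Fin w),
        ((Finset.univ \ S).filter fun z => insert z S ⊆ c).card
          = ∑ z ∈ Finset.univ \ S, if insert z S ⊆ c then 1 else 0 := by
      intro c; rw [Finset.card_filter]
    rw [Multiset.map_congr rfl fun c _ => hrw c, ms_sum_swap]
    have hterm : ∀ z ∈ Finset.univ \ S,
        (C.map fun c => if insert z S ⊆ c then 1 else 0).sum = L := by
      intro z hz
      rw [ms_sum_ite, mul_one]
      refine hL _ ?_
      rw [Finset.card_insert_of_notMem (by simpa using hz), hS]
    rw [Finset.sum_congr rfl hterm, Finset.sum_const, smul_eq_mul,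
      Finset.card_sdiff_of_subset (Finset.subset_univ S), hS, Finset.card_univ, Fintype.card_fin, mul_comm]
  omega

/-- Given a resolvable (v,b,r,k,λ)-BIBD and a 3-(w, w/2, λ')-design with
w = v/k > 4 even, there exists a 3-(v, v/2, μ)-design with
μ = λ'*(3λw/(w-4) + r). -/
theorem stmt_8 {X : Type*} [Fintype X] [DecidableEq X]
    (v b r k w lam lam' : ℕ)
    (hk : 2 ≤ k) (hkv : k < v) (hX : Fintype.card X = v)
    (hvw : v = k * w) (hb : b = r * w) (hw4 : 4 < w) (hweven : Even w)
    (B : Fin r → Fin w → Finset X)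
    (hsize : ∀ i j, (B i j).card = k)
    (hpc : ∀ (i : Fin r) (x : X), ∃! j : Fin w, x ∈ B i j)
    (hpair : ∀ x y : X, x ≠ y →
      (Finset.univ.filter (fun p : Fin r × Fin w => x ∈ B p.1 p.2 ∧ y ∈ B p.1 p.2)).card = lam)
    (C : Multiset (Finset (Fin w)))
    (hCsize : ∀ c ∈ C, c.card = w / 2)
    (hC3 : ∀ T : Finset (Fin w), T.card = 3 →
      Multiset.card (C.filter (fun c => T ⊆ c)) = lam') :
    ∃ μ : ℕ, (μ : ℚ) = (lam' : ℚ) * (3 * (lam : ℚ) * (w : ℚ) / ((w : ℚ) - 4) + (r : ℚ)) ∧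
      ∃ D : Multiset (Finset X),
        (∀ A ∈ D, A.card = v / 2) ∧
        (∀ T : Finset X, T.card = 3 →
          Multiset.card (D.filter (fun A => T ⊆ A)) = μ) := by
  classical
  obtain ⟨n, hn⟩ : ∃ n, w = (n + 3) + (n + 3) := by
    obtain ⟨m, hm⟩ := hweven
    exact ⟨m - 3, by omega⟩
  -- the unique block index function
  set f : Fin r → X → Fin w := fun i x => (hpc i x).exists.choose with hfdef
  have hf : ∀ i x, x ∈ B i (f i x) := fun i x => (hpc i x).exists.choose_spec
  have hfu : ∀ i x j, x ∈ B i j → j = f i x := fun i x j hj =>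
    (hpc i x).unique hj (hf i x)
  -- block sizes of C
  have hCsize' : ∀ c ∈ C, c.card = n + 3 := by
    intro c hc; rw [hCsize c hc]; omega
  -- pair and point counts in C
  set S₀ : Finset (Fin w) := {⟨0, by omega⟩, ⟨1, by omega⟩} with hS₀def
  have hS₀ : S₀.card = 2 := by
    rw [hS₀def, Finset.card_insert_of_notMem (by simp [Fin.ext_iff]), Finset.card_singleton]
  set lam2 : ℕ := Multiset.card (C.filter fun c => S₀ ⊆ c) with hlam2def
  have h22 : lam2 * (n + 1) = lam' * (2 * n + 4) := by
    have h := step_lemma C hCsize' hC3 S₀ hS₀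
    have e1 : n + 3 - 2 = n + 1 := by omega
    have e2 : w - 2 = 2 * n + 4 := by omega
    rwa [e1, e2] at h
  have hlam2 : ∀ S : Finset (Fin w), S.card = 2 →
      Multiset.card (C.filter fun c => S ⊆ c) = lam2 := by
    intro S hS
    have h := step_lemma C hCsize' hC3 S hS
    have e1 : n + 3 - 2 = n + 1 := by omega
    have e2 : w - 2 = 2 * n + 4 := by omega
    rw [e1, e2] at h
    apply Nat.eq_of_mul_eq_mul_right (show 0 < n + 1 by omega)
    rw [h, h22]
  set S₁ : Finset (Fin w) := {⟨0, by omega⟩} with hS₁def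
  set lam1 : ℕ := Multiset.card (C.filter fun c => S₁ ⊆ c) with hlam1def
  have h21 : lam1 * (n + 2) = lam2 * (2 * n + 5) := by
    have h := step_lemma C hCsize' (fun T hT => hlam2 T hT) S₁ (Finset.card_singleton _)
    have e1 : n + 3 - 1 = n + 2 := by omega
    have e2 : w - 1 = 2 * n + 5 := by omega
    rwa [e1, e2] at h
  have hlam1 : ∀ S : Finset (Fin w), S.card = 1 →
      Multiset.card (C.filter fun c => S ⊆ c) = lam1 := by
    intro S hS
    have h := step_lemma C hCsize' (fun T hT => hlam2 T hT) S hS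
    have e1 : n + 3 - 1 = n + 2 := by omega
    have e2 : w - 1 = 2 * n + 5 := by omega
    rw [e1, e2] at h
    apply Nat.eq_of_mul_eq_mul_right (show 0 < n + 2 by omega)
    rw [h, h21]
  -- the key identity
  have key : lam1 + 2 * lam' = 3 * lam2 := by
    have hpos : 0 < (n + 2) * (n + 1) := by positivity
    have hmain : (lam1 + 2 * lam') * ((n + 2) * (n + 1)) = (3 * lam2) * ((n + 2) * (n + 1)) := by
      zify at h21 h22 ⊢
      linear_combination ((n : ℤ) + 1) * h21 - ((n : ℤ) + 1) * h22
    exact Nat.eq_of_mul_eq_mul_right hpos hmain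
  have hle : lam' ≤ lam2 := by
    have h : lam' * (n + 1) ≤ lam2 * (n + 1) := by
      rw [h22]; exact Nat.mul_le_mul_left _ (by omega)
    exact Nat.le_of_mul_le_mul_right h (by omega)
  -- per-class pair counting
  have hpairclass : ∀ x y : X, x ≠ y →
      (Finset.univ.filter fun i : Fin r => f i x = f i y).card = lam := by
    intro x y hxy
    rw [← hpair x y hxy]
    apply Finset.card_bij' (fun i _ => (i, f i x)) (fun p _ => p.1)
    · intro i hi
      simp only [Finset.mem_filter, Finset.mem_univ, true_and] at hi ⊢
      refine ⟨hf i x, ?_⟩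
      rw [hi]; exact hf i y
    · intro p hp
      simp only [Finset.mem_filter, Finset.mem_univ, true_and] at hp ⊢
      rw [← hfu p.1 x p.2 hp.1, ← hfu p.1 y p.2 hp.2]
    · intro i _; rfl
    · intro p hp
      simp only [Finset.mem_filter, Finset.mem_univ, true_and] at hp
      exact Prod.ext rfl (hfu p.1 x p.2 hp.1).symm
  -- the subset equivalence
  have hTsub : ∀ (i : Fin r) (c : Finset (Fin w)) (T : Finset X),
      T ⊆ c.biUnion (B i) ↔ T.image (f i) ⊆ c := by
    intro i c T
    constructor
    · intro h j hj
      rw [Finset.mem_image] at hj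
      obtain ⟨x, hx, rfl⟩ := hj
      have hx' := h hx
      rw [Finset.mem_biUnion] at hx'
      obtain ⟨j', hj', hxj⟩ := hx'
      rwa [hfu i x j' hxj] at hj'
    · intro h x hx
      rw [Finset.mem_biUnion]
      exact ⟨f i x, h (Finset.mem_image_of_mem _ hx), hf i x⟩
  -- disjointness of blocks within a class
  have hdisj : ∀ (i : Fin r) (j₁ j₂ : Fin w), j₁ ≠ j₂ → Disjoint (B i j₁) (B i j₂) := by
    intro i j₁ j₂ hne
    rw [Finset.disjoint_left]
    intro x h1 h2
    exact hne ((hfu i x j₁ h1).trans (hfu i x j₂ h2).symm)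
  have hμeq : (r * lam' + lam2 * (3 * lam) - lam' * (3 * lam)) + lam' * (3 * lam)
      = r * lam' + lam2 * (3 * lam) :=
    Nat.sub_add_cancel (le_trans (Nat.mul_le_mul_right _ hle) (Nat.le_add_left _ _))
  refine ⟨r * lam' + lam2 * (3 * lam) - lam' * (3 * lam), ?_, ?_⟩
  · -- rational identity
    have hμq : ((r * lam' + lam2 * (3 * lam) - lam' * (3 * lam) : ℕ) : ℚ)
        = (r : ℚ) * lam' + (lam2 : ℚ) * (3 * lam) - (lam' : ℚ) * (3 * lam) := by
      have h := congrArg (fun t : ℕ => (t : ℚ)) hμeq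
      push_cast at h
      linarith
    have h22q : (lam2 : ℚ) * (n + 1) = (lam' : ℚ) * (2 * n + 4) := by
      exact_mod_cast congrArg (fun t : ℕ => (t : ℚ)) h22
    have hwq : (w : ℚ) = 2 * (n : ℚ) + 6 := by rw [hn]; push_cast; ring
    rw [hμq, hwq]
    have h4 : (2 : ℚ) * (n : ℚ) + 6 - 4 ≠ 0 := by
      have : (0 : ℚ) ≤ (n : ℚ) := Nat.cast_nonneg n
      intro h; linarith
    field_simp
    linear_combination (6 * (lam : ℚ)) * h22q
  · -- the design D
    refine ⟨(Finset.univ.val : Multiset (Fin r)).bind (fun i => C.map fun c => c.biUnion (B i)),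
      ?_, ?_⟩
    · intro A hA
      rw [Multiset.mem_bind] at hA
      obtain ⟨i, _, hA⟩ := hA
      rw [Multiset.mem_map] at hA
      obtain ⟨c, hc, rfl⟩ := hA
      rw [Finset.card_biUnion (fun j₁ _ j₂ _ h => hdisj i j₁ j₂ h)]
      have hsum : ∑ j ∈ c, (B i j).card = c.card * k := by
        rw [Finset.sum_congr rfl fun j _ => hsize i j, Finset.sum_const, smul_eq_mul]
      rw [hsum, hCsize' c hc]
      have h2v : v = 2 * ((n + 3) * k) := by rw [hvw, hn]; ring
      omega
    · -- triple counting
      intro T hT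
      obtain ⟨x, y, z, hxy, hxz, hyz, rfl⟩ := Finset.card_eq_three.mp hT
      set G : Fin r → ℕ := fun i =>
        Multiset.card (C.filter fun c => ({x, y, z} : Finset X).image (f i) ⊆ c) with hGdef
      set e : Fin r → ℕ := fun i =>
        (if f i x = f i y then 1 else 0) + (if f i y = f i z then 1 else 0)
          + (if f i x = f i z then 1 else 0) with hedef
      have hper : ∀ i : Fin r, G i + lam' * e i = lam' + lam2 * e i := by
        intro i
        have himg : ({x, y, z} : Finset X).image (f i)
            = {f i x, f i y, f i z} := by
          rw [Finset.image_insert, Finset.image_insert, Finset.image_singleton]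
        have hGc : G i = Multiset.card (C.filter fun c =>
            ({f i x, f i y, f i z} : Finset (Fin w)) ⊆ c) := by
          rw [hGdef]; simp only [himg]
        by_cases h1 : f i x = f i y <;> by_cases h2 : f i y = f i z
        · -- all equal
          have h3 : f i x = f i z := h1.trans h2
          have hc : ({f i x, f i y, f i z} : Finset (Fin w)).card = 1 := by
            rw [← h2, ← h1]
            rw [Finset.card_insert_of_mem (by simp), Finset.card_insert_of_mem (by simp),
              Finset.card_singleton]
          have hG : G i = lam1 := by rw [hGc]; exact hlam1 _ hc
          have he : e i = 3 := by rw [hedef]; simp [h1, h2, h3]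
          rw [hG, he]; omega
        · -- x=y, y≠z
          have h3 : f i x ≠ f i z := fun h => h2 (h1.symm.trans h)
          have hc : ({f i x, f i y, f i z} : Finset (Fin w)).card = 2 := by
            rw [h1]
            rw [Finset.card_insert_of_mem (by simp),
              Finset.card_insert_of_notMem (by simpa using h2), Finset.card_singleton]
          have hG : G i = lam2 := by rw [hGc]; exact hlam2 _ hc
          have he : e i = 1 := by rw [hedef]; simp [h1, h2, h3]
          rw [hG, he]; ring
        · -- x≠y, y=z
          have h3 : f i x ≠ f i z := fun h => h1 (h.trans h2.symm)
          have hc : ({f i x, f i y, f i z} : Finset (Fin w)).card = 2 := by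
            rw [← h2]
            rw [Finset.card_insert_of_notMem (by simp [h1]),
              Finset.card_insert_of_mem (by simp), Finset.card_singleton]
          have hG : G i = lam2 := by rw [hGc]; exact hlam2 _ hc
          have he : e i = 1 := by rw [hedef]; simp [h1, h2, h3]
          rw [hG, he]; ring
        · by_cases h3 : f i x = f i z
          · -- x=z only
            have hc : ({f i x, f i y, f i z} : Finset (Fin w)).card = 2 := by
              have hset : ({f i x, f i y, f i z} : Finset (Fin w)) = {f i x, f i y} := by
                ext t
                simp only [Finset.mem_insert, Finset.mem_singleton, ← h3]
                tauto
              rw [hset, Finset.card_insert_of_notMem (by simpa using h1),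
                Finset.card_singleton]
            have hG : G i = lam2 := by rw [hGc]; exact hlam2 _ hc
            have h2' : ¬ f i z = f i y := fun h => h2 h.symm
            have he : e i = 1 := by rw [hedef]; simp [h1, h2, h3, h2']
            rw [hG, he]; ring
          · -- all distinct
            have hc : ({f i x, f i y, f i z} : Finset (Fin w)).card = 3 := by
              rw [Finset.card_insert_of_notMem (by simp [h1, h3]),
                Finset.card_insert_of_notMem (by simpa using h2), Finset.card_singleton]
            have hG : G i = lam' := by rw [hGc]; exact hC3 _ hc
            have he : e i = 0 := by rw [hedef]; simp [h1, h2, h3]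
            rw [hG, he]; ring
      -- total count
      have hcount : Multiset.card
          ((((Finset.univ.val : Multiset (Fin r)).bind
            (fun i => C.map fun c => c.biUnion (B i))).filter
              (fun A => ({x, y, z} : Finset X) ⊆ A)))
          = ∑ i : Fin r, G i := by
        rw [ms_card_filter_bind]
        rw [show ((Finset.univ.val : Multiset (Fin r)).map fun i =>
            Multiset.card ((C.map fun c => c.biUnion (B i)).filter
              fun A => ({x, y, z} : Finset X) ⊆ A)).sum
          = ∑ i : Fin r, Multiset.card ((C.map fun c => c.biUnion (B i)).filter
              fun A => ({x, y, z} : Finset X) ⊆ A) from rfl]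
        refine Finset.sum_congr rfl fun i _ => ?_
        rw [ms_card_filter_map, hGdef]
        simp only
        congr 1
        refine Multiset.filter_congr fun c _ => ?_
        exact hTsub i c _
      have hesum : ∑ i : Fin r, e i = 3 * lam := by
        rw [hedef]
        simp only
        rw [Finset.sum_add_distrib, Finset.sum_add_distrib,
          ← Finset.card_filter, ← Finset.card_filter, ← Finset.card_filter,
          hpairclass x y hxy, hpairclass y z hyz, hpairclass x z hxz]
        ring
      have hsum : (∑ i : Fin r, G i) + lam' * (3 * lam)
          = r * lam' + lam2 * (3 * lam) := by
        have h := Finset.sum_congr rfl fun i (_ : i ∈ Finset.univ) => hper i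
        rw [Finset.sum_add_distrib, Finset.sum_add_distrib, ← Finset.mul_sum, ← Finset.mul_sum,
          hesum, Finset.sum_const, Finset.card_univ, Fintype.card_fin, smul_eq_mul] at h
        exact h
      rw [hcount]
      omega
end

section
/- Let (X,B) be a resolvable (v,k,λ)-BIBD with v/k = 4 and r parallel classes, and let the indexing design be the trivial 2-(4,2,1)-design (all 2-subsets of a 4-set). Then the constructed design, formed by taking within each parallel class all unions of two blocks, is a 3-(v, v/2, 3λ)-design. -/
open Finset

lemma msfilter_bind {α β : Type*} (s : Multiset α) (f : α → Multiset β)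
    (p : β → Prop) [DecidablePred p] :
    Multiset.filter p (s.bind f) = s.bind (fun a => (f a).filter p) := by
  induction s using Multiset.induction with
  | empty => simp
  | cons a s ih => simp [Multiset.filter_add, ih]

lemma key4 : ∀ a b c : Fin 4,
    ((Finset.univ.filter (fun s : Finset (Fin 4) => s.card = 2 ∧ ({a,b,c} : Finset (Fin 4)) ⊆ s)).card)
      = ((if a = b then 1 else 0) + (if b = c then 1 else 0) + (if a = c then 1 else 0) : ℕ) := by
  decide

lemma sum4 : ∀ a b : Fin 4,
    (∑ j' : Fin 4, if j' = a ∧ j' = b then 1 else 0) = ((if a = b then 1 else 0) : ℕ) := by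
  decide

/-- If (X,B) is a resolvable (v,k,λ)-BIBD with v/k = 4, then the design formed by
taking, within each parallel class, all unions of two blocks, is a 3-(v, v/2, 3λ)-design. -/
theorem stmt_9 {X : Type*} [Fintype X] [DecidableEq X]
    (v k lam r : ℕ)
    (hk : 2 ≤ k) (hkv : k < v) (hX : Fintype.card X = v) (hvw : v = k * 4)
    (B : Fin r → Fin 4 → Finset X)
    (hsize : ∀ i j, (B i j).card = k)
    (hpc : ∀ (i : Fin r) (x : X), ∃! j : Fin 4, x ∈ B i j)
    (hpair : ∀ x y : X, x ≠ y →
      (Finset.univ.filter (fun p : Fin r × Fin 4 => x ∈ B p.1 p.2 ∧ y ∈ B p.1 p.2)).card = lam) :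
    ∀ D : Multiset (Finset X),
      D = (Finset.univ.val : Multiset (Fin r)).bind
            (fun i => ((Finset.univ.filter (fun c : Finset (Fin 4) => c.card = 2)).val).map
              (fun c => c.biUnion (fun j => B i j))) →
      (∀ A ∈ D, A.card = v / 2) ∧
      (∀ T : Finset X, T.card = 3 →
        Multiset.card (D.filter (fun A => T ⊆ A)) = 3 * lam) := by
  intro D hD
  -- choose block function
  have hf : ∃ f : Fin r → X → Fin 4, ∀ i x j', x ∈ B i j' ↔ j' = f i x := by
    refine ⟨fun i x => (hpc i x).choose, fun i x j' => ?_⟩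
    constructor
    · intro h; exact ((hpc i x).choose_spec.2 j' h)
    · rintro rfl; exact (hpc i x).choose_spec.1
  obtain ⟨f, hf⟩ := hf
  have hdisj : ∀ i (j1 j2 : Fin 4), j1 ≠ j2 → Disjoint (B i j1) (B i j2) := by
    intro i j1 j2 hne
    refine Finset.disjoint_left.2 fun x h1 h2 => hne ?_
    rw [hf i x j1] at h1; rw [hf i x j2] at h2; rw [h1, h2]
  have hsub : ∀ (i : Fin r) (T : Finset X) (c : Finset (Fin 4)),
      T ⊆ c.biUnion (B i) ↔ T.image (f i) ⊆ c := by
    intro i T c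
    constructor
    · intro h j hj
      obtain ⟨x, hx, rfl⟩ := Finset.mem_image.1 hj
      obtain ⟨j', hj', hx'⟩ := Finset.mem_biUnion.1 (h hx)
      rwa [(hf i x j').1 hx'] at hj'
    · intro h x hx
      exact Finset.mem_biUnion.2 ⟨f i x, h (Finset.mem_image_of_mem _ hx),
        (hf i x (f i x)).2 rfl⟩
  constructor
  · intro A hA
    rw [hD] at hA
    obtain ⟨i, -, hA⟩ := Multiset.mem_bind.1 hA
    obtain ⟨c, hc, rfl⟩ := Multiset.mem_map.1 hA
    rw [← Finset.mem_def, Finset.mem_filter] at hc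
    rw [Finset.card_biUnion (fun j1 _ j2 _ h => hdisj i j1 j2 h)]
    simp only [hsize]
    rw [Finset.sum_const, hc.2, smul_eq_mul]
    omega
  · intro T hT
    obtain ⟨x, y, z, hxy, hxz, hyz, rfl⟩ := Finset.card_eq_three.1 hT
    -- pair count per class
    have hpairclass : ∀ (a b : X), a ≠ b →
        (∑ i : Fin r, if f i a = f i b then 1 else 0) = lam := by
      intro a b hab
      rw [← hpair a b hab, Finset.card_filter, Fintype.sum_prod_type]
      refine Finset.sum_congr rfl fun i _ => ?_
      simp only [hf]
      exact (sum4 (f i a) (f i b)).symm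
    rw [hD, msfilter_bind]
    rw [Multiset.card_bind]
    have : ∀ i : Fin r,
        Multiset.card (Multiset.filter (fun A => ({x,y,z} : Finset X) ⊆ A)
          (((Finset.univ.filter (fun c : Finset (Fin 4) => c.card = 2)).val).map
            (fun c => c.biUnion (fun j => B i j))))
        = (if f i x = f i y then 1 else 0) + (if f i y = f i z then 1 else 0)
            + (if f i x = f i z then 1 else 0) := by
      intro i
      rw [Multiset.filter_map, Multiset.card_map]
      rw [← key4 (f i x) (f i y) (f i z)]
      rw [← Finset.filter_val, ← Finset.card_def, Finset.filter_filter]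
      congr 1
      apply Finset.filter_congr
      intro c _
      simp only [Function.comp]
      rw [hsub i {x,y,z} c]
      have himg : ({x,y,z} : Finset X).image (f i) = {f i x, f i y, f i z} := by
        simp [Finset.image_insert]
      rw [himg]
    simp only [Function.comp_def]
    rw [Multiset.map_congr rfl (fun i _ => this i)]
    have hs : (Multiset.map (fun i => ((if f i x = f i y then 1 else 0) + if f i y = f i z then 1 else 0) + if f i x = f i z then 1 else 0) (Finset.univ.val : Multiset (Fin r))).sum
        = ∑ i : Fin r, (((if f i x = f i y then 1 else 0) + if f i y = f i z then 1 else 0) + if f i x = f i z then 1 else 0) := rfl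
    rw [hs, Finset.sum_add_distrib, Finset.sum_add_distrib,
      hpairclass x y hxy, hpairclass y z hyz, hpairclass x z hxz]
    ring
end

section
/- If the indexing design (Y,C) in the Construction is resolvable, then the constructed design (X,D) is resolvable. -/
/-- If the indexing design in the Construction is resolvable, then the constructed
design is resolvable. -/
theorem stmt_10 {X : Type*} [Fintype X] [DecidableEq X]
    (v b r k w b' r' k' u : ℕ)
    (hk : 2 ≤ k) (hkv : k < v) (hX : Fintype.card X = v)
    (hvw : v = k * w) (hb : b = r * w)
    (B : Fin r → Fin w → Finset X)
    (hsize : ∀ i j, (B i j).card = k)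
    (hpc : ∀ (i : Fin r) (x : X), ∃! j : Fin w, x ∈ B i j)
    -- the indexing design, given with a resolution into r' parallel classes of u = w/k' blocks
    (hk' : 2 ≤ k') (hk'w : k' < w) (hu : w = k' * u)
    (Γ : Fin r' → Fin u → Finset (Fin w))
    (hΓsize : ∀ l m, (Γ l m).card = k')
    (hΓpc : ∀ (l : Fin r') (a : Fin w), ∃! m : Fin u, a ∈ Γ l m) :
    ∀ D : Multiset (Finset X),
      D = (Finset.univ.val : Multiset (Fin r)).bind
            (fun i => (Finset.univ.val : Multiset (Fin r' × Fin u)).map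
              (fun p => (Γ p.1 p.2).biUnion (fun j => B i j))) →
      -- the constructed design is resolvable
      ∃ (n : ℕ) (P : Fin n → Multiset (Finset X)),
        (∑ l : Fin n, P l) = D ∧
        ∀ (l : Fin n) (x : X), Multiset.card ((P l).filter (fun A => x ∈ A)) = 1 := by
  intro D hD
  refine ⟨r * r', fun q => ((Finset.univ.val : Multiset (Fin u)).map
    fun m => (Γ (finProdFinEquiv.symm q).2 m).biUnion (B (finProdFinEquiv.symm q).1)), ?_, ?_⟩
  · subst hD
    rw [← (finProdFinEquiv (m := r) (n := r')).sum_comp]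
    simp only [Equiv.symm_apply_apply]
    rw [Fintype.sum_prod_type]
    show _ = (Finset.univ.val : Multiset (Fin r)).bind _
    have hbind : ∀ (f : Fin r → Multiset (Finset X)),
        (Finset.univ.val : Multiset (Fin r)).bind f = ∑ i, f i := fun f => rfl
    rw [hbind]
    refine Finset.sum_congr rfl fun i _ => ?_
    rw [← Finset.univ_product_univ, Finset.product_val]
    show _ = Multiset.map _ (Multiset.product _ _)
    rw [Multiset.product, Multiset.map_bind]
    simp only [Multiset.map_map]
    rfl
  · intro q x
    set i := (finProdFinEquiv.symm q).1
    set l := (finProdFinEquiv.symm q).2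
    obtain ⟨j0, hj0, hj0u⟩ := hpc i x
    obtain ⟨m0, hm0, hm0u⟩ := hΓpc l j0
    have key : ∀ m : Fin u, (x ∈ (Γ l m).biUnion (B i)) ↔ m = m0 := by
      intro m
      simp only [Finset.mem_biUnion]
      constructor
      · rintro ⟨j, hjΓ, hjx⟩
        exact hm0u m (by rwa [hj0u j hjx] at hjΓ)
      · rintro rfl
        exact ⟨j0, hm0, hj0⟩
    rw [Multiset.filter_map, Multiset.card_map]
    have : Multiset.filter ((fun A => x ∈ A) ∘ fun m => (Γ l m).biUnion (B i))
        (Finset.univ.val : Multiset (Fin u)) = Multiset.filter (fun m => m = m0) Finset.univ.val := by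
      apply Multiset.filter_congr
      intro m _
      exact key m
    rw [this]
    have : Multiset.filter (fun m => m = m0) (Finset.univ.val : Multiset (Fin u))
        = (Finset.univ.filter (fun m => m = m0)).val := rfl
    rw [this]
    rw [← Finset.card_def, Finset.filter_eq']
    simp
end

section
/- For all integers v, k with k ≥ 2, 2k dividing v, and v/k ≥ 4, the inequality C(v-1, k-1) * C(v/k, v/(2k)) < C(v, v/2) holds. -/
/-- ascending product: `stmt11_asc a r = a * (a+1) * ... * (a+r-1)`. -/
def stmt11_asc (a : ℕ) : ℕ → ℕ
  | 0 => 1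
  | r + 1 => stmt11_asc a r * (a + r)

/-- odd product: `stmt11_op n m = (2n+1)(2n+3)...(2n+2m-1)`. -/
def stmt11_op (n : ℕ) : ℕ → ℕ
  | 0 => 1
  | m + 1 => stmt11_op n m * (2 * n + 2 * m + 1)

namespace Stmt11
open Nat

lemma asc_pos {a : ℕ} (ha : 0 < a) : ∀ r, 0 < stmt11_asc a r
  | 0 => Nat.one_pos
  | r + 1 => Nat.mul_pos (asc_pos ha r) (by omega)

lemma asc_add (a s : ℕ) : ∀ t, stmt11_asc a (s + t) = stmt11_asc a s * stmt11_asc (a + s) t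
  | 0 => by simp [stmt11_asc]
  | t + 1 => by
    show stmt11_asc a (s + t) * (a + (s + t)) = _
    rw [asc_add a s t]
    show _ = stmt11_asc a s * (stmt11_asc (a + s) t * (a + s + t))
    ring

lemma asc_succ_left (a r : ℕ) : stmt11_asc a (r + 1) = a * stmt11_asc (a + 1) r := by
  have h := asc_add a 1 r
  rw [Nat.add_comm 1 r] at h
  rw [h]
  show stmt11_asc a 0 * (a + 0) * _ = _
  simp [stmt11_asc]

lemma asc_eq_descFactorial (a : ℕ) : ∀ r, stmt11_asc (a + 1) r = (a + r).descFactorial r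
  | 0 => by simp [stmt11_asc]
  | r + 1 => by
    show stmt11_asc (a + 1) r * (a + 1 + r) = (a + r + 1).descFactorial (r + 1)
    rw [Nat.succ_descFactorial_succ, asc_eq_descFactorial a r]
    ring

lemma choose_factorial_asc (a r : ℕ) :
    (a + r).choose r * r.factorial = stmt11_asc (a + 1) r := by
  rw [asc_eq_descFactorial, Nat.descFactorial_eq_factorial_mul_choose, Nat.mul_comm]

lemma evenOdd (n : ℕ) : ∀ t, stmt11_asc (2 * n) (2 * t) = 2 ^ t * stmt11_asc n t * stmt11_op n t
  | 0 => by simp [stmt11_asc, stmt11_op]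
  | t + 1 => by
    rw [show 2 * (t + 1) = 2 * t + 1 + 1 from by ring]
    show stmt11_asc (2 * n) (2 * t) * (2 * n + 2 * t) * (2 * n + (2 * t + 1)) = _
    rw [evenOdd n t]
    show _ = 2 ^ (t + 1) * (stmt11_asc n t * (n + t)) * (stmt11_op n t * (2 * n + 2 * t + 1))
    ring

lemma cbShift (n : ℕ) : ∀ m, centralBinom (n + m) * stmt11_asc (n + 1) m
    = centralBinom n * (2 ^ m * stmt11_op n m)
  | 0 => by simp [stmt11_asc, stmt11_op]
  | m + 1 => by
    have key := Nat.succ_mul_centralBinom_succ (n + m)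
    calc centralBinom (n + (m + 1)) * stmt11_asc (n + 1) (m + 1)
        = (n + m + 1) * centralBinom (n + m + 1) * stmt11_asc (n + 1) m := by
          show centralBinom (n + (m + 1)) * (stmt11_asc (n + 1) m * (n + 1 + m)) = _
          rw [show n + (m + 1) = n + m + 1 from by ring]; ring
      _ = 2 * (2 * (n + m) + 1) * centralBinom (n + m) * stmt11_asc (n + 1) m := by rw [key]
      _ = 2 * (2 * (n + m) + 1) * (centralBinom (n + m) * stmt11_asc (n + 1) m) := by ring
      _ = 2 * (2 * (n + m) + 1) * (centralBinom n * (2 ^ m * stmt11_op n m)) := by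
          rw [cbShift n m]
      _ = centralBinom n * (2 ^ (m + 1) * (stmt11_op n m * (2 * n + 2 * m + 1))) := by ring
      _ = centralBinom n * (2 ^ (m + 1) * stmt11_op n (m + 1)) := rfl

lemma perfactor (j t i : ℕ) (ht : 1 ≤ t) :
    2 * ((j + 1) * (t + 1) + 1 + i) ^ 2
      ≤ ((j + 1) * (2 * t + 1) + 2 * i + 1) * ((j + 1) * (2 * t + 1) + 2 * i + 2) := by
  obtain ⟨s, rfl⟩ : ∃ s, t = s + 1 := ⟨t - 1, by omega⟩
  have key : ((j + 1) * (2 * (s + 1) + 1) + 2 * i + 1) * ((j + 1) * (2 * (s + 1) + 1) + 2 * i + 2)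
      = 2 * ((j + 1) * (s + 1 + 1) + 1 + i) ^ 2
        + (2 + 6 * i + 2 * i ^ 2 + 6 * s + 4 * s * i + 2 * s ^ 2 + 3 * j + 4 * j * i
          + 10 * j * s + 4 * j * s * i + 4 * j * s ^ 2 + 1 * j ^ 2 + 4 * j ^ 2 * s
          + 2 * j ^ 2 * s ^ 2) := by ring
  rw [key]
  exact Nat.le_add_right _ _

lemma SL (j t : ℕ) (ht : 1 ≤ t) : ∀ u,
    2 ^ u * (stmt11_asc ((j + 1) * (t + 1) + 1) u) ^ 2
      ≤ stmt11_asc ((j + 1) * (2 * t + 1) + 1) (2 * u)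
  | 0 => by simp [stmt11_asc]
  | u + 1 => by
    rw [show 2 * (u + 1) = 2 * u + 1 + 1 from by ring]
    show _ ≤ stmt11_asc ((j + 1) * (2 * t + 1) + 1) (2 * u)
          * ((j + 1) * (2 * t + 1) + 1 + 2 * u) * ((j + 1) * (2 * t + 1) + 1 + (2 * u + 1))
    have hstep : 2 ^ (u + 1) * (stmt11_asc ((j + 1) * (t + 1) + 1) (u + 1)) ^ 2
        = (2 ^ u * (stmt11_asc ((j + 1) * (t + 1) + 1) u) ^ 2)
          * (2 * ((j + 1) * (t + 1) + 1 + u) ^ 2) := by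
      show 2 ^ (u + 1) * (stmt11_asc ((j + 1) * (t + 1) + 1) u * ((j + 1) * (t + 1) + 1 + u)) ^ 2
          = _
      ring
    rw [hstep]
    have hpf : 2 * ((j + 1) * (t + 1) + 1 + u) ^ 2
        ≤ ((j + 1) * (2 * t + 1) + 1 + 2 * u) * ((j + 1) * (2 * t + 1) + 1 + (2 * u + 1)) := by
      calc 2 * ((j + 1) * (t + 1) + 1 + u) ^ 2
          ≤ ((j + 1) * (2 * t + 1) + 2 * u + 1) * ((j + 1) * (2 * t + 1) + 2 * u + 2) :=
            perfactor j t u ht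
        _ = ((j + 1) * (2 * t + 1) + 1 + 2 * u) * ((j + 1) * (2 * t + 1) + 1 + (2 * u + 1)) := by
            ring
    calc (2 ^ u * (stmt11_asc ((j + 1) * (t + 1) + 1) u) ^ 2)
          * (2 * ((j + 1) * (t + 1) + 1 + u) ^ 2)
        ≤ stmt11_asc ((j + 1) * (2 * t + 1) + 1) (2 * u)
          * (((j + 1) * (2 * t + 1) + 1 + 2 * u) * ((j + 1) * (2 * t + 1) + 1 + (2 * u + 1))) :=
          Nat.mul_le_mul (SL j t ht u) hpf
      _ = stmt11_asc ((j + 1) * (2 * t + 1) + 1) (2 * u)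
          * ((j + 1) * (2 * t + 1) + 1 + 2 * u) * ((j + 1) * (2 * t + 1) + 1 + (2 * u + 1)) := by
          ring

lemma star (j t : ℕ) (ht : 1 ≤ t) :
    stmt11_asc ((j + 1) * (t + 1)) (t + 1) * stmt11_asc ((j + 1) * (t + 1) + 1) (t + 1)
      ≤ (j + 1) * stmt11_asc ((j + 1) * (2 * t + 1) + 1) (2 * t + 1) := by
  have h1 := asc_succ_left ((j + 1) * (t + 1)) t
  have h2 : stmt11_asc ((j + 1) * (t + 1) + 1) (t + 1)
      = stmt11_asc ((j + 1) * (t + 1) + 1) t * ((j + 1) * (t + 1) + 1 + t) := rfl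
  have h3 : stmt11_asc ((j + 1) * (2 * t + 1) + 1) (2 * t + 1)
      = stmt11_asc ((j + 1) * (2 * t + 1) + 1) (2 * t) * ((j + 1) * (2 * t + 1) + 1 + 2 * t) :=
    rfl
  have hSL := SL j t ht t
  have htp : t + 1 ≤ 2 ^ t := Nat.lt_two_pow_self
  have hkey : (t + 1) * ((j + 1) * (t + 1) + 1 + t)
      ≤ 2 ^ t * ((j + 1) * (2 * t + 1) + 1 + 2 * t) := by
    calc (t + 1) * ((j + 1) * (t + 1) + 1 + t) = ((t + 1) * (t + 1)) * (j + 2) := by ring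
      _ ≤ (2 ^ t * (2 * t + 1)) * (j + 2) :=
          Nat.mul_le_mul_right _ (Nat.mul_le_mul htp (by omega))
      _ = 2 ^ t * ((j + 1) * (2 * t + 1) + 1 + 2 * t) := by ring
  have hmain : 2 ^ t * (stmt11_asc ((j + 1) * (t + 1)) (t + 1)
        * stmt11_asc ((j + 1) * (t + 1) + 1) (t + 1))
      ≤ 2 ^ t * ((j + 1) * stmt11_asc ((j + 1) * (2 * t + 1) + 1) (2 * t + 1)) := by
    calc 2 ^ t * (stmt11_asc ((j + 1) * (t + 1)) (t + 1)
          * stmt11_asc ((j + 1) * (t + 1) + 1) (t + 1))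
        = (j + 1) * (((t + 1) * ((j + 1) * (t + 1) + 1 + t))
            * (2 ^ t * (stmt11_asc ((j + 1) * (t + 1) + 1) t) ^ 2)) := by
          rw [h1, h2]; ring
      _ ≤ (j + 1) * ((2 ^ t * ((j + 1) * (2 * t + 1) + 1 + 2 * t))
            * stmt11_asc ((j + 1) * (2 * t + 1) + 1) (2 * t)) :=
          Nat.mul_le_mul_left _ (Nat.mul_le_mul hkey hSL)
      _ = 2 ^ t * ((j + 1) * stmt11_asc ((j + 1) * (2 * t + 1) + 1) (2 * t + 1)) := by
          rw [h3]; ring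
  exact Nat.le_of_mul_le_mul_left hmain (Nat.pow_pos (n := t) (by norm_num : 0 < 2))

lemma Rcore (j t : ℕ) (ht : 1 ≤ t) :
    ((j + 1) * (2 * t + 1) + j + (2 * t + 2)).choose (j + 1) * centralBinom ((j + 1) * (t + 1))
      ≤ ((j + 1) * (2 * t + 1) + j).choose j
          * centralBinom ((j + 1) * (t + 1) + (t + 1)) := by
  set q := (j + 1) * (2 * t + 1) with hq
  set n := (j + 1) * (t + 1) with hn
  have e1 : (q + j + (2 * t + 2)).choose (j + 1) * (j + 1).factorial
      = stmt11_asc (q + (2 * t + 2)) (j + 1) := by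
    have h := choose_factorial_asc (q + 2 * t + 1) (j + 1)
    rw [show q + 2 * t + 1 + (j + 1) = q + j + (2 * t + 2) from by ring,
      show q + 2 * t + 1 + 1 = q + (2 * t + 2) from by ring] at h
    exact h
  have e0 : (q + j).choose j * j.factorial = stmt11_asc (q + 1) j := choose_factorial_asc q j
  have F1 : stmt11_asc (q + (2 * t + 2)) (j + 1) * stmt11_asc (q + 1) (2 * t + 1)
      = stmt11_asc (q + 1) j * stmt11_asc (q + j + 1) (2 * t + 2) := by
    have hL := asc_add (q + 1) (2 * t + 1) (j + 1)
    have hR := asc_add (q + 1) j (2 * t + 2)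
    rw [show q + 1 + (2 * t + 1) = q + (2 * t + 2) from by ring,
      show 2 * t + 1 + (j + 1) = j + (2 * t + 2) from by omega] at hL
    rw [show q + 1 + j = q + j + 1 from by ring] at hR
    rw [Nat.mul_comm, ← hL]; exact hR
  have F2 := cbShift n (t + 1)
  have hEO : stmt11_asc (q + j + 1) (2 * t + 2)
      = 2 ^ (t + 1) * stmt11_asc n (t + 1) * stmt11_op n (t + 1) := by
    rw [show q + j + 1 = 2 * n from by rw [hq, hn]; ring,
      show 2 * t + 2 = 2 * (t + 1) from by ring]
    exact evenOdd n (t + 1)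
  have hstar := star j t ht
  rw [← hq, ← hn] at hstar
  have F3 : stmt11_asc (q + j + 1) (2 * t + 2) * stmt11_asc (n + 1) (t + 1)
      ≤ (j + 1) * (2 ^ (t + 1) * stmt11_op n (t + 1)) * stmt11_asc (q + 1) (2 * t + 1) := by
    rw [hEO]
    calc 2 ^ (t + 1) * stmt11_asc n (t + 1) * stmt11_op n (t + 1)
          * stmt11_asc (n + 1) (t + 1)
        = (2 ^ (t + 1) * stmt11_op n (t + 1))
            * (stmt11_asc n (t + 1) * stmt11_asc (n + 1) (t + 1)) := by ring
      _ ≤ (2 ^ (t + 1) * stmt11_op n (t + 1))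
            * ((j + 1) * stmt11_asc (q + 1) (2 * t + 1)) :=
          Nat.mul_le_mul_left _ hstar
      _ = (j + 1) * (2 ^ (t + 1) * stmt11_op n (t + 1)) * stmt11_asc (q + 1) (2 * t + 1) := by
          ring
  have big : ((q + j + (2 * t + 2)).choose (j + 1) * centralBinom n)
        * ((j + 1).factorial * (stmt11_asc (q + 1) (2 * t + 1) * stmt11_asc (n + 1) (t + 1)))
      ≤ ((q + j).choose j * centralBinom (n + (t + 1)))
        * ((j + 1).factorial * (stmt11_asc (q + 1) (2 * t + 1) * stmt11_asc (n + 1) (t + 1))) := by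
    calc ((q + j + (2 * t + 2)).choose (j + 1) * centralBinom n)
          * ((j + 1).factorial * (stmt11_asc (q + 1) (2 * t + 1) * stmt11_asc (n + 1) (t + 1)))
        = (stmt11_asc (q + (2 * t + 2)) (j + 1) * stmt11_asc (q + 1) (2 * t + 1))
            * (centralBinom n * stmt11_asc (n + 1) (t + 1)) := by rw [← e1]; ring
      _ = (stmt11_asc (q + 1) j * stmt11_asc (q + j + 1) (2 * t + 2))
            * (centralBinom n * stmt11_asc (n + 1) (t + 1)) := by rw [F1]
      _ = (stmt11_asc (q + 1) j * centralBinom n)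
            * (stmt11_asc (q + j + 1) (2 * t + 2) * stmt11_asc (n + 1) (t + 1)) := by ring
      _ ≤ (stmt11_asc (q + 1) j * centralBinom n)
            * ((j + 1) * (2 ^ (t + 1) * stmt11_op n (t + 1))
              * stmt11_asc (q + 1) (2 * t + 1)) := Nat.mul_le_mul_left _ F3
      _ = (j + 1) * stmt11_asc (q + 1) j
            * (centralBinom n * (2 ^ (t + 1) * stmt11_op n (t + 1)))
            * stmt11_asc (q + 1) (2 * t + 1) := by ring
      _ = (j + 1) * stmt11_asc (q + 1) j
            * (centralBinom (n + (t + 1)) * stmt11_asc (n + 1) (t + 1))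
            * stmt11_asc (q + 1) (2 * t + 1) := by rw [F2]
      _ = ((q + j).choose j * centralBinom (n + (t + 1)))
          * ((j + 1).factorial
            * (stmt11_asc (q + 1) (2 * t + 1) * stmt11_asc (n + 1) (t + 1))) := by
          rw [← e0, Nat.factorial_succ]; ring
  have hpos : 0 < (j + 1).factorial
      * (stmt11_asc (q + 1) (2 * t + 1) * stmt11_asc (n + 1) (t + 1)) :=
    Nat.mul_pos (Nat.factorial_pos _)
      (Nat.mul_pos (asc_pos (by omega) _) (asc_pos (by omega) _))
  exact Nat.le_of_mul_le_mul_right big hpos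

lemma cbBase : ∀ s, (4 * s + 7) * centralBinom (s + 2) < centralBinom (2 * s + 4)
  | 0 => by decide
  | s + 1 => by
    have IH := cbBase s
    rw [show 4 * (s + 1) + 7 = 4 * (s + 2) + 3 from by ring,
      show s + 1 + 2 = (s + 2) + 1 from by ring,
      show 2 * (s + 1) + 4 = 2 * (s + 2) + 2 from by ring]
    set m := s + 2 with hm
    have h1 := Nat.succ_mul_centralBinom_succ m
    have h2 := Nat.succ_mul_centralBinom_succ (2 * m)
    have h3 := Nat.succ_mul_centralBinom_succ (2 * m + 1)
    have key : (2 * m + 1) ^ 2 * centralBinom m < (4 * m + 1) * centralBinom (2 * m) := by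
      calc (2 * m + 1) ^ 2 * centralBinom m
          ≤ ((4 * m + 1) * (4 * s + 7)) * centralBinom m := by
            apply Nat.mul_le_mul_right
            rw [hm]; nlinarith [sq_nonneg s]
        _ = (4 * m + 1) * ((4 * s + 7) * centralBinom m) := by ring
        _ < (4 * m + 1) * centralBinom (2 * m) := by
            apply mul_lt_mul_of_pos_left _ (by omega)
            rw [hm, show 2 * (s + 2) = 2 * s + 4 from by ring]
            exact IH
    have T' : ((m + 1) * ((2 * m + 1) * (2 * m + 2))) * ((4 * m + 3) * centralBinom (m + 1))
        < ((m + 1) * ((2 * m + 1) * (2 * m + 2))) * centralBinom (2 * m + 2) := by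
      calc ((m + 1) * ((2 * m + 1) * (2 * m + 2))) * ((4 * m + 3) * centralBinom (m + 1))
          = ((4 * m + 3) * ((2 * m + 1) * (2 * m + 2))) * ((m + 1) * centralBinom (m + 1)) := by
            ring
        _ = ((4 * m + 3) * ((2 * m + 1) * (2 * m + 2))) * (2 * (2 * m + 1) * centralBinom m) := by
            rw [h1]
        _ = (4 * (m + 1) * (4 * m + 3)) * ((2 * m + 1) ^ 2 * centralBinom m) := by ring
        _ < (4 * (m + 1) * (4 * m + 3)) * ((4 * m + 1) * centralBinom (2 * m)) :=
            mul_lt_mul_of_pos_left key (by positivity)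
        _ = ((m + 1) * (4 * m + 3) * 2) * (2 * (2 * (2 * m) + 1) * centralBinom (2 * m)) := by
            ring
        _ = ((m + 1) * (4 * m + 3) * 2) * ((2 * m + 1) * centralBinom (2 * m + 1)) := by rw [h2]
        _ = ((m + 1) * (2 * m + 1)) * (2 * (2 * (2 * m + 1) + 1) * centralBinom (2 * m + 1)) := by
            ring
        _ = ((m + 1) * (2 * m + 1)) * ((2 * m + 1 + 1) * centralBinom (2 * m + 1 + 1)) := by
            rw [h3]
        _ = ((m + 1) * ((2 * m + 1) * (2 * m + 2))) * centralBinom (2 * m + 2) := by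
            rw [show 2 * m + 1 + 1 = 2 * m + 2 from rfl]; ring
    exact lt_of_mul_lt_mul_left T' (Nat.zero_le _)

lemma main (k m : ℕ) (hk : 2 ≤ k) (hm : 2 ≤ m) :
    (2 * k * m - 1).choose (k - 1) * centralBinom m < centralBinom (k * m) := by
  induction k, hk using Nat.le_induction with
  | base =>
    obtain ⟨s, rfl⟩ : ∃ s, m = s + 2 := ⟨m - 2, by omega⟩
    rw [show (2 : ℕ) - 1 = 1 from rfl, Nat.choose_one_right,
      show 2 * 2 * (s + 2) - 1 = 4 * s + 7 from by omega,
      show 2 * (s + 2) = 2 * s + 4 from by ring]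
    exact cbBase s
  | succ k hk IH =>
    obtain ⟨j, rfl⟩ : ∃ j, k = j + 1 := ⟨k - 1, by omega⟩
    obtain ⟨t, rfl⟩ : ∃ t, m = t + 1 := ⟨m - 1, by omega⟩
    have ht : 1 ≤ t := by omega
    have R := Rcore j t ht
    have IH' : ((j + 1) * (2 * t + 1) + j).choose j * centralBinom (t + 1)
        < centralBinom ((j + 1) * (t + 1)) := by
      have h := IH
      rw [show 2 * (j + 1) * (t + 1) = ((j + 1) * (2 * t + 1) + j) + 1 from by ring] at h
      simpa using h
    rw [show 2 * (j + 1 + 1) * (t + 1) = ((j + 1) * (2 * t + 1) + j + (2 * t + 2)) + 1 from by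
        ring, Nat.add_sub_cancel,
      show j + 1 + 1 - 1 = j + 1 from by omega,
      show (j + 1 + 1) * (t + 1) = (j + 1) * (t + 1) + (t + 1) from by ring]
    have chain : (((j + 1) * (2 * t + 1) + j + (2 * t + 2)).choose (j + 1)
          * centralBinom (t + 1)) * centralBinom ((j + 1) * (t + 1))
        < centralBinom ((j + 1) * (t + 1) + (t + 1)) * centralBinom ((j + 1) * (t + 1)) := by
      calc (((j + 1) * (2 * t + 1) + j + (2 * t + 2)).choose (j + 1)
            * centralBinom (t + 1)) * centralBinom ((j + 1) * (t + 1))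
          = (((j + 1) * (2 * t + 1) + j + (2 * t + 2)).choose (j + 1)
            * centralBinom ((j + 1) * (t + 1))) * centralBinom (t + 1) := by ring
        _ ≤ (((j + 1) * (2 * t + 1) + j).choose j
            * centralBinom ((j + 1) * (t + 1) + (t + 1))) * centralBinom (t + 1) :=
            Nat.mul_le_mul_right _ R
        _ = (((j + 1) * (2 * t + 1) + j).choose j * centralBinom (t + 1))
            * centralBinom ((j + 1) * (t + 1) + (t + 1)) := by ring
        _ < centralBinom ((j + 1) * (t + 1))
            * centralBinom ((j + 1) * (t + 1) + (t + 1)) :=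
            mul_lt_mul_of_pos_right IH' (Nat.centralBinom_pos _)
        _ = centralBinom ((j + 1) * (t + 1) + (t + 1)) * centralBinom ((j + 1) * (t + 1)) := by
            ring
    exact lt_of_mul_lt_mul_right chain (Nat.zero_le _)

end Stmt11

/-- For k ≥ 2, 2k ∣ v, v/k ≥ 4:  C(v-1,k-1) * C(v/k, v/(2k)) < C(v, v/2). -/
theorem stmt_11 (v k : ℕ) (hk : 2 ≤ k) (hdvd : 2 * k ∣ v) (hw : 4 ≤ v / k) :
    (v - 1).choose (k - 1) * (v / k).choose (v / (2 * k)) < v.choose (v / 2) := by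
  obtain ⟨c, hc⟩ := hdvd
  have hvk : v / k = 2 * c := by
    rw [hc, show 2 * k * c = k * (2 * c) from by ring,
      Nat.mul_div_cancel_left _ (show 0 < k from by omega)]
  have hvkk : v / (2 * k) = c := by
    rw [hc, Nat.mul_div_cancel_left _ (show 0 < 2 * k from by omega)]
  have hv2 : v / 2 = k * c := by
    rw [hc, show 2 * k * c = 2 * (k * c) from by ring,
      Nat.mul_div_cancel_left _ (show (0:ℕ) < 2 from by omega)]
  rw [hvk] at hw
  have hc2 : 2 ≤ c := by omega
  have h := Stmt11.main k c hk hc2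
  rw [Nat.centralBinom_eq_two_mul_choose, Nat.centralBinom_eq_two_mul_choose,
    show 2 * (k * c) = 2 * k * c from by ring] at h
  rw [hvk, hvkk, hv2, hc]
  exact h
end
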